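/- Let β be an algebraic unit of degree n ≥ 5 over ℚ with conjugates β_1, …, β_n such that Gal(ℚ(β_1,…,β_n)/ℚ) = 𝔄_n. Let a_1, …, a_n ∈ ℤ and set α = β_1^{a_1} ⋯ β_n^{a_n}; assume α generates ℚ(β_1,…,β_n) over ℚ. Let x = (x_1,…,x_n) with x_i = log|β_i| and y = (y_1,…,y_n) with y_j = a_j − (1/n)∑_{i=1}^n a_i. Then x, y ∈ H_n, log M(β) = (n/2)·|x|_1, and log M(α) = (n·n!/4)·s_n(x,y). -/

import Mathlib

open Polynomial

set_option synthInstance.maxHeartbeats 1000000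
set_option maxHeartbeats 4000000

/-- The primitive integer minimal polynomial of an algebraic number `γ`. -/
noncomputable def intMinPoly (γ : ℂ) : Polynomial ℤ :=
  (IsLocalization.integerNormalization (nonZeroDivisors ℤ) (minpoly ℚ γ)).primPart

/-- The Mahler measure `M(γ) = |a| ∏ max(1,|γᵢ|)`. -/
noncomputable def mahlerM (γ : ℂ) : ℝ :=
  ((intMinPoly γ).leadingCoeff.natAbs : ℝ) *
    (((minpoly ℚ γ).aroots ℂ).map (fun z => max 1 ‖z‖)).prod

/-- The image of the permutation representation of the Galois group of the splitting
field on the roots `B 0, …, B (n-1)`. -/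
def galoisImage (n : ℕ) (B : Fin n → ℂ) : Set (Equiv.Perm (Fin n)) :=
  {τ | ∃ σ : ℂ ≃ₐ[ℚ] ℂ, ∀ i, σ (B i) = B (τ i)}

/-- `sₙ(x,y) = (2/n!) ∑_{σ ∈ 𝔄ₙ} |(1/n) ∑ⱼ x_{σ(j)} yⱼ|`. -/
noncomputable def snBil (n : ℕ) (x y : Fin n → ℝ) : ℝ :=
  (2 / (n.factorial : ℝ)) *
    ∑ σ : alternatingGroup (Fin n), |(1 / (n : ℝ)) * ∑ j, x ((σ : Equiv.Perm (Fin n)) j) * y j|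

/- ## Auxiliary lemmas -/

/-- Any `ℚ`-automorphism of an intermediate field of `ℂ` extends to a
`ℚ`-automorphism of `ℂ`. -/
theorem stmt8_exists_extend (L : IntermediateField ℚ ℂ) (g : L ≃ₐ[ℚ] L) :
    ∃ σ : ℂ ≃ₐ[ℚ] ℂ, ∀ z : L, σ z = ↑(g z) := by
  obtain ⟨s, hs⟩ := exists_isTranscendenceBasis (L : Type) ℂ
  haveI := IsAlgClosed.isAlgClosure_of_transcendence_basis _ hs
  set A := Algebra.adjoin (L : Type) (Set.range ((↑) : s → ℂ)) with hA
  let e1 : MvPolynomial s L ≃+* MvPolynomial s L := MvPolynomial.mapEquiv s g.toRingEquiv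
  let f : A ≃+* A := hs.1.aevalEquiv.symm.toRingEquiv.trans (e1.trans hs.1.aevalEquiv.toRingEquiv)
  let σ0 : ℂ ≃+* ℂ := IsAlgClosure.equivOfEquiv ℂ ℂ f
  have hf : ∀ z : L, f (algebraMap L A z) = algebraMap L A (g z) := by
    intro z
    have h1 : hs.1.aevalEquiv.symm (algebraMap L A z) = MvPolynomial.C z := by
      rw [AlgEquiv.symm_apply_eq]
      have := hs.1.aevalEquiv.commutes z
      rw [MvPolynomial.algebraMap_eq] at this
      exact this.symm
    show hs.1.aevalEquiv (e1 (hs.1.aevalEquiv.symm (algebraMap L A z)))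
        = algebraMap L A (g z)
    rw [h1]
    have h2 : e1 (MvPolynomial.C z) = MvPolynomial.C (g z) := by
      simp [e1, MvPolynomial.mapEquiv_apply]
    rw [h2]
    have := hs.1.aevalEquiv.commutes (g z)
    rw [MvPolynomial.algebraMap_eq] at this
    exact this
  have key : ∀ z : L, σ0 z = ↑(g z) := by
    intro z
    have h1 : (z : ℂ) = algebraMap A ℂ (algebraMap L A z) := rfl
    rw [h1, IsAlgClosure.equivOfEquiv_algebraMap, hf]
    rfl
  refine ⟨AlgEquiv.ofRingEquiv (f := σ0) ?_, key⟩
  intro q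
  have : algebraMap ℚ ℂ q = ((q : ℚ) : ℂ) := by norm_cast
  rw [this]
  exact map_ratCast σ0 q

theorem stmt8_U1 {γ : ℂ} (hγ : IsIntegral ℤ γ) (hinv : IsIntegral ℤ γ⁻¹) (h0 : γ ≠ 0) :
    ((minpoly ℤ γ).coeff 0).natAbs = 1 := by
  haveI : Invertible γ⁻¹ := invertibleOfNonzero (inv_ne_zero h0)
  have hrev : (Polynomial.aeval γ) (minpoly ℤ γ⁻¹).reverse = 0 := by
    have h := eval₂_reverse_eq_zero_iff (algebraMap ℤ ℂ) γ⁻¹ (minpoly ℤ γ⁻¹)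
    have h2 : eval₂ (algebraMap ℤ ℂ) γ⁻¹ (minpoly ℤ γ⁻¹) = 0 := minpoly.aeval ℤ γ⁻¹
    rw [invOf_eq_inv, inv_inv] at h
    rw [aeval_def]
    exact h.2 h2
  obtain ⟨k, hk⟩ := minpoly.isIntegrallyClosed_dvd hγ hrev
  have hc0 : ((minpoly ℤ γ⁻¹).reverse).coeff 0 = 1 := by
    rw [coeff_zero_reverse]
    exact minpoly.monic hinv
  rw [hk, mul_coeff_zero] at hc0
  exact Int.isUnit_iff_natAbs_eq.mp (IsUnit.of_mul_eq_one _ hc0)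

theorem stmt8_U2 {γ : ℂ} (hγ : IsIntegral ℤ γ) (hinv : IsIntegral ℤ γ⁻¹) (h0 : γ ≠ 0)
    {r : ℂ} (hr : (Polynomial.aeval r) (minpoly ℚ γ) = 0) :
    IsIntegral ℤ r ∧ IsIntegral ℤ r⁻¹ ∧ r ≠ 0 := by
  have heq : minpoly ℚ γ = (minpoly ℤ γ).map (algebraMap ℤ ℚ) :=
    minpoly.isIntegrallyClosed_eq_field_fractions ℚ ℂ hγ
  have haev : (Polynomial.aeval r) (minpoly ℤ γ) = 0 := by
    rw [heq, aeval_map_algebraMap] at hr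
    exact hr
  have hint : IsIntegral ℤ r := ⟨minpoly ℤ γ, minpoly.monic hγ, haev⟩
  have hu : ((minpoly ℤ γ).coeff 0).natAbs = 1 := stmt8_U1 hγ hinv h0
  have hune : (minpoly ℤ γ).coeff 0 ≠ 0 := by
    intro h; rw [h] at hu; simp at hu
  have hr0 : r ≠ 0 := by
    intro h
    rw [h, aeval_def, eval₂_at_zero] at haev
    have : (((minpoly ℤ γ).coeff 0 : ℤ) : ℂ) = 0 := by simpa using haev
    exact hune (by exact_mod_cast this)
  refine ⟨hint, ?_, hr0⟩
  have huu : (minpoly ℤ γ).coeff 0 * (minpoly ℤ γ).coeff 0 = 1 := by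
    rcases Int.natAbs_eq_iff.mp hu with h | h <;> rw [h] <;> norm_num
  have htc : (minpoly ℤ γ).trailingCoeff = (minpoly ℤ γ).coeff 0 := by
    rw [trailingCoeff]
    congr 1
    rw [natTrailingDegree_eq_zero]
    exact Or.inr hune
  haveI : Invertible r := invertibleOfNonzero hr0
  have hrev : (Polynomial.aeval r⁻¹) (minpoly ℤ γ).reverse = 0 := by
    have h := eval₂_reverse_eq_zero_iff (algebraMap ℤ ℂ) r (minpoly ℤ γ)
    rw [invOf_eq_inv] at h
    rw [aeval_def]
    exact h.2 haev
  refine ⟨C ((minpoly ℤ γ).coeff 0) * (minpoly ℤ γ).reverse, ?_, ?_⟩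
  · rw [Monic, leadingCoeff_mul, leadingCoeff_C, reverse_leadingCoeff, htc]
    exact huu
  · show eval₂ (algebraMap ℤ ℂ) r⁻¹ _ = 0
    rw [← aeval_def, map_mul, hrev, mul_zero]

theorem stmt8_U3 {γ : ℂ} (hγ : IsIntegral ℤ γ) : (intMinPoly γ).leadingCoeff.natAbs = 1 := by
  have heq : minpoly ℚ γ = (minpoly ℤ γ).map (algebraMap ℤ ℚ) :=
    minpoly.isIntegrallyClosed_eq_field_fractions ℚ ℂ hγ
  obtain ⟨c, hc⟩ := IsLocalization.integerNormalization_map_to_map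
    (nonZeroDivisors ℤ) (minpoly ℚ γ)
  have hcne : (c : ℤ) ≠ 0 := nonZeroDivisors.coe_ne_zero c
  have hsmul : ((c : ℤ) • minpoly ℚ γ) = C (((c : ℤ) : ℚ)) * minpoly ℚ γ := by
    ext n
    simp [coeff_smul, coeff_C_mul, zsmul_eq_mul]
  have hNeq : IsLocalization.integerNormalization (nonZeroDivisors ℤ) (minpoly ℚ γ)
      = C (c : ℤ) * minpoly ℤ γ := by
    apply Polynomial.map_injective (algebraMap ℤ ℚ) (fun a b h => by exact_mod_cast h)
    rw [hc, Polynomial.map_mul, Polynomial.map_C, ← heq, hsmul]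
    rfl
  set N := IsLocalization.integerNormalization (nonZeroDivisors ℤ) (minpoly ℚ γ) with hN
  have hlcN : N.leadingCoeff = (c : ℤ) := by
    rw [hNeq, leadingCoeff_mul, leadingCoeff_C, (minpoly.monic hγ).leadingCoeff, mul_one]
  have hcontN : N.content = normalize (c : ℤ) := by
    rw [hNeq, content_C_mul, ((minpoly.monic hγ).isPrimitive.content_eq_one), mul_one]
  have hkey : N.leadingCoeff = N.content * N.primPart.leadingCoeff := by
    conv_lhs => rw [N.eq_C_content_mul_primPart]
    rw [leadingCoeff_mul, leadingCoeff_C]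
  rw [hlcN, hcontN] at hkey
  have h2 := congrArg Int.natAbs hkey
  rw [Int.natAbs_mul, ← Int.abs_eq_normalize, Int.natAbs_abs] at h2
  have hcn : (c : ℤ).natAbs ≠ 0 := Int.natAbs_ne_zero.mpr hcne
  show N.primPart.leadingCoeff.natAbs = 1
  exact Nat.eq_of_mul_eq_mul_left (Nat.pos_of_ne_zero hcn)
    (h2.symm.trans (mul_one _).symm)

theorem stmt8_U4 {γ : ℂ} (hγ : IsIntegral ℤ γ) (hinv : IsIntegral ℤ γ⁻¹) (h0 : γ ≠ 0) :
    ‖((minpoly ℚ γ).aroots ℂ).prod‖ = 1 := by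
  have hQ : IsIntegral ℚ γ := hγ.tower_top
  have hmo : ((minpoly ℚ γ).map (algebraMap ℚ ℂ)).Monic := (minpoly.monic hQ).map _
  have hsp : ((minpoly ℚ γ).map (algebraMap ℚ ℂ)).Splits :=
    IsAlgClosed.splits _
  have h := hsp.coeff_zero_eq_prod_roots_of_monic hmo
  have heq : minpoly ℚ γ = (minpoly ℤ γ).map (algebraMap ℤ ℚ) :=
    minpoly.isIntegrallyClosed_eq_field_fractions ℚ ℂ hγ
  have hc0 : ((minpoly ℚ γ).map (algebraMap ℚ ℂ)).coeff 0
      = (((minpoly ℤ γ).coeff 0 : ℤ) : ℂ) := by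
    rw [coeff_map, heq, coeff_map]
    simp
  have hu := stmt8_U1 hγ hinv h0
  have habs : ‖((minpoly ℚ γ).map (algebraMap ℚ ℂ)).coeff 0‖ = 1 := by
    rw [hc0, Complex.norm_intCast]
    rcases Int.natAbs_eq_iff.mp hu with h' | h' <;> rw [h'] <;> norm_num
  have h2 := congrArg (‖·‖) h
  rw [norm_mul, habs] at h2
  have h3 : ‖(-1 : ℂ) ^ ((minpoly ℚ γ).map (algebraMap ℚ ℂ)).natDegree‖ = 1 := by
    rw [norm_pow]
    simp
  rw [h3, one_mul] at h2
  rw [aroots_def]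
  exact h2.symm

theorem stmt8_unit_mahler {γ : ℂ} {ι : Type} [Fintype ι] {f : ι → ℂ}
    (hroots : (minpoly ℚ γ).aroots ℂ = Multiset.map f Finset.univ.val)
    (hγ : IsIntegral ℤ γ) (hinv : IsIntegral ℤ γ⁻¹) (h0 : γ ≠ 0) :
    (∀ i, f i ≠ 0) ∧ (∑ i, Real.log (‖f i‖) = 0) ∧
    Real.log (mahlerM γ) = (1/2) * ∑ i, |Real.log (‖f i‖)| := by
  have hprod : ∏ i, ‖f i‖ = 1 := by
    have h4 := stmt8_U4 hγ hinv h0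
    rw [hroots] at h4
    rw [← h4, ← Complex.norm_prod]
    rfl
  have hne : ∀ i, f i ≠ 0 := by
    intro i hi
    have : ∏ j, ‖f j‖ = 0 :=
      Finset.prod_eq_zero (Finset.mem_univ i) (by simp [hi])
    rw [hprod] at this
    norm_num at this
  have habsne : ∀ i ∈ Finset.univ, ‖f i‖ ≠ 0 := by
    intro i _
    simpa using hne i
  have hsum : ∑ i, Real.log (‖f i‖) = 0 := by
    rw [← Real.log_prod habsne, hprod, Real.log_one]
  refine ⟨hne, hsum, ?_⟩
  have hm : mahlerM γ = ∏ i, max 1 (‖f i‖) := by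
    rw [mahlerM, stmt8_U3 hγ, hroots, Multiset.map_map]
    rw [Nat.cast_one, one_mul]
    rfl
  have hlogmax : ∀ i, Real.log (max 1 (‖f i‖))
      = max 0 (Real.log (‖f i‖)) := by
    intro i
    rcases le_total (‖f i‖) 1 with h | h
    · rw [max_eq_left h, Real.log_one, max_eq_left]
      exact Real.log_nonpos (by positivity) h
    · rw [max_eq_right h, max_eq_right]
      exact Real.log_nonneg h
  have hmaxne : ∀ i ∈ Finset.univ, max 1 (‖f i‖) ≠ 0 := by
    intro i _
    positivity
  rw [hm, Real.log_prod hmaxne]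
  have hhalve : ∀ i, Real.log (max 1 (‖f i‖))
      = (Real.log (‖f i‖) + |Real.log (‖f i‖)|) / 2 := by
    intro i
    rw [hlogmax i]
    rcases le_total (Real.log (‖f i‖)) 0 with h | h
    · rw [max_eq_left h, abs_of_nonpos h]; ring
    · rw [max_eq_right h, abs_of_nonneg h]; ring
  rw [Finset.sum_congr rfl (fun i _ => hhalve i), ← Finset.sum_div,
    Finset.sum_add_distrib, hsum, zero_add]
  ring

theorem stmt8_int_zpow {z : ℂ} (h1 : IsIntegral ℤ z) (h2 : IsIntegral ℤ z⁻¹) (m : ℤ) :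
    IsIntegral ℤ (z ^ m) := by
  rcases le_or_gt 0 m with h | h
  · lift m to ℕ using h
    rw [zpow_natCast]
    exact h1.pow m
  · have hm : z ^ m = (z⁻¹) ^ ((-m).toNat) := by
      rw [← zpow_natCast, Int.toNat_of_nonneg (by omega), zpow_neg, inv_zpow, inv_inv]
    rw [hm]
    exact h2.pow _

/-- Let `β` be an algebraic unit of degree `n ≥ 5` with conjugates `Bᵢ`,
Galois group `𝔄ₙ`, and `α = ∏ Bᵢ^{aᵢ}` a generator of the splitting field.  With
`xᵢ = log|Bᵢ|` and `yⱼ = aⱼ - (1/n)∑ aᵢ` one has `x, y ∈ Hₙ`,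
`log M(β) = (n/2)|x|₁`, and `log M(α) = (n·n!/4)·sₙ(x,y)`. -/
theorem stmt_8 (n : ℕ) (hn : 5 ≤ n) (b : ℂ) (B : Fin n → ℂ)
    (hbint : IsIntegral ℤ b) (hbunit : IsIntegral ℤ b⁻¹)
    (hdeg : (minpoly ℚ b).natDegree = n)
    (hroots : (minpoly ℚ b).aroots ℂ = Multiset.map B Finset.univ.val)
    (hgal : galoisImage n B = (alternatingGroup (Fin n) : Set (Equiv.Perm (Fin n))))
    (a : Fin n → ℤ) (α : ℂ) (hα : α = ∏ i, B i ^ a i)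
    (hgen : IntermediateField.adjoin ℚ {α} = IntermediateField.adjoin ℚ (Set.range B))
    (x y : Fin n → ℝ)
    (hx : ∀ i, x i = Real.log (‖B i‖))
    (hy : ∀ j, y j = (a j : ℝ) - (1 / (n : ℝ)) * ∑ i, (a i : ℝ)) :
    (∑ j, x j = 0) ∧ (∑ j, y j = 0) ∧
    Real.log (mahlerM b) = ((n : ℝ) / 2) * ((1 / (n : ℝ)) * ∑ j, |x j|) ∧
    Real.log (mahlerM α) = ((n : ℝ) * (n.factorial : ℝ) / 4) * snBil n x y := by
  classical
  have hn0 : (n : ℝ) ≠ 0 := Nat.cast_ne_zero.mpr (by omega)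
  have hb0 : b ≠ 0 := by
    intro h
    rw [h, minpoly.zero, natDegree_X] at hdeg
    omega
  obtain ⟨hBne, hxsum0, hlogb⟩ := stmt8_unit_mahler hroots hbint hbunit hb0
  have hx0 : ∑ j, x j = 0 := by
    rw [Finset.sum_congr rfl (fun j _ => hx j)]
    exact hxsum0
  have hy0 : ∑ j, y j = 0 := by
    rw [Finset.sum_congr rfl (fun j _ => hy j), Finset.sum_sub_distrib,
      Finset.sum_const, Finset.card_univ, Fintype.card_fin, nsmul_eq_mul]
    field_simp
    ring
  refine ⟨hx0, hy0, ?_, ?_⟩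
  · have h1 : ∑ i, |Real.log (‖B i‖)| = ∑ j, |x j| := by
      exact Finset.sum_congr rfl (fun j _ => by rw [hx j])
    rw [hlogb, h1]
    field_simp
  -- ### Part 4
  -- basic root facts
  have hQb : IsIntegral ℚ b := hbint.tower_top
  have hmpb_ne : minpoly ℚ b ≠ 0 := minpoly.ne_zero hQb
  have hBroot : ∀ i, (Polynomial.aeval (B i)) (minpoly ℚ b) = 0 := by
    intro i
    have hmem : B i ∈ (minpoly ℚ b).aroots ℂ := by
      rw [hroots]
      exact Multiset.mem_map_of_mem B (Finset.mem_val.mpr (Finset.mem_univ i))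
    exact (Polynomial.mem_aroots.mp hmem).2
  have hBfacts := fun i => stmt8_U2 hbint hbunit hb0 (hBroot i)
  have hBint : ∀ i, IsIntegral ℤ (B i) := fun i => (hBfacts i).1
  have hBinv : ∀ i, IsIntegral ℤ (B i)⁻¹ := fun i => (hBfacts i).2.1
  have hBne0 : ∀ i, B i ≠ 0 := fun i => (hBfacts i).2.2
  have hnodupB : ((minpoly ℚ b).aroots ℂ).Nodup :=
    Polynomial.nodup_roots (((minpoly.irreducible hQb).separable).map)
  have hBinj : Function.Injective B := by
    rw [hroots] at hnodupB
    intro i j hij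
    exact Multiset.inj_on_of_nodup_map hnodupB i
      (Finset.mem_val.mpr (Finset.mem_univ i)) j (Finset.mem_val.mpr (Finset.mem_univ j)) hij
  -- α is an algebraic unit
  have hαint : IsIntegral ℤ α := by
    rw [hα]
    exact IsIntegral.prod _ (fun i _ => stmt8_int_zpow (hBint i) (hBinv i) (a i))
  have hα0 : α ≠ 0 := by
    rw [hα]
    exact Finset.prod_ne_zero_iff.mpr (fun i _ => zpow_ne_zero _ (hBne0 i))
  have hαinveq : α⁻¹ = ∏ i, B i ^ (-(a i)) := by
    rw [hα, ← Finset.prod_inv_distrib]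
    exact Finset.prod_congr rfl (fun i _ => by rw [zpow_neg])
  have hαinv : IsIntegral ℤ α⁻¹ := by
    rw [hαinveq]
    exact IsIntegral.prod _ (fun i _ => stmt8_int_zpow (hBint i) (hBinv i) (-(a i)))
  have hQα : IsIntegral ℚ α := hαint.tower_top
  -- the splitting field L
  set L := IntermediateField.adjoin ℚ (Set.range B) with hL
  have hrootSet : (minpoly ℚ b).rootSet ℂ = Set.range B := by
    ext z
    rw [Polynomial.mem_rootSet]
    constructor
    · rintro ⟨-, hz⟩
      have : z ∈ (minpoly ℚ b).aroots ℂ := Polynomial.mem_aroots.mpr ⟨hmpb_ne, hz⟩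
      rw [hroots] at this
      obtain ⟨i, -, hi⟩ := Multiset.mem_map.mp this
      exact ⟨i, hi⟩
    · rintro ⟨i, rfl⟩
      exact ⟨hmpb_ne, hBroot i⟩
  haveI hsplitL : Polynomial.IsSplittingField ℚ L (minpoly ℚ b) := by
    rw [hL, ← hrootSet]
    exact IntermediateField.adjoin_rootSet_isSplittingField (IsAlgClosed.splits _)
  haveI : Normal ℚ L := Normal.of_isSplittingField (minpoly ℚ b)
  have hBmemL : ∀ i, B i ∈ L := fun i => IntermediateField.subset_adjoin ℚ _ ⟨i, rfl⟩
  set elB : Fin n → L := fun i => ⟨B i, hBmemL i⟩ with helB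
  set elα : L := ∏ i, elB i ^ a i with helαdef
  have helα : (elα : ℂ) = α := by
    rw [hα, helαdef]
    push_cast
    rfl
  -- the conjugates of α
  set g : alternatingGroup (Fin n) → ℂ :=
    fun τ => ∏ i, B ((τ : Equiv.Perm (Fin n)) i) ^ a i with hgdef
  have hsigma : ∀ τ : alternatingGroup (Fin n),
      ∃ σ : ℂ ≃ₐ[ℚ] ℂ, ∀ i, σ (B i) = B ((τ : Equiv.Perm (Fin n)) i) := by
    intro τ
    have : (τ : Equiv.Perm (Fin n)) ∈ galoisImage n B := by
      rw [hgal]; exact τ.2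
    exact this
  have hσα : ∀ (σ : ℂ ≃ₐ[ℚ] ℂ) (τ : Equiv.Perm (Fin n)), (∀ i, σ (B i) = B (τ i)) →
      σ α = ∏ i, B (τ i) ^ a i := by
    intro σ τ hστ
    rw [hα, map_prod]
    exact Finset.prod_congr rfl (fun i _ => by rw [map_zpow₀, hστ i])
  have hgroot : ∀ τ : alternatingGroup (Fin n), g τ ∈ (minpoly ℚ α).aroots ℂ := by
    intro τ
    obtain ⟨σ, hσ⟩ := hsigma τ
    have hσa : σ α = g τ := hσα σ _ hσ
    rw [Polynomial.mem_aroots]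
    refine ⟨minpoly.ne_zero hQα, ?_⟩
    rw [← hσa]
    show (Polynomial.aeval ((σ : ℂ →ₐ[ℚ] ℂ) α)) (minpoly ℚ α) = 0
    rw [Polynomial.aeval_algHom_apply, minpoly.aeval, map_zero]
  have hginj : Function.Injective g := by
    intro τ τ' h
    obtain ⟨σ, hσ⟩ := hsigma τ
    obtain ⟨σ', hσ'⟩ := hsigma τ'
    have h1 : σ α = σ' α := by rw [hσα σ _ hσ, hσα σ' _ hσ']; exact h
    have hBadj : ∀ i, B i ∈ Algebra.adjoin ℚ ({α} : Set ℂ) := by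
      intro i
      have h2 : B i ∈ IntermediateField.adjoin ℚ ({α} : Set ℂ) := by
        rw [hgen]; exact hBmemL i
      rwa [← IntermediateField.adjoin_simple_toSubalgebra_of_isAlgebraic hQα.isAlgebraic,
        IntermediateField.mem_toSubalgebra]
    have key : ∀ i, σ (B i) = σ' (B i) := by
      intro i
      have hle : Algebra.adjoin ℚ ({α} : Set ℂ) ≤
          AlgHom.equalizer (σ : ℂ →ₐ[ℚ] ℂ) (σ' : ℂ →ₐ[ℚ] ℂ) := by
        rw [Algebra.adjoin_le_iff]
        rintro z hz
        rw [Set.mem_singleton_iff] at hz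
        subst hz
        exact h1
      exact hle (hBadj i)
    have hττ' : ∀ i, (τ : Equiv.Perm (Fin n)) i = (τ' : Equiv.Perm (Fin n)) i := by
      intro i
      apply hBinj
      rw [← hσ i, ← hσ' i, key i]
    exact Subtype.ext (Equiv.ext hττ')
  have hsurj : ∀ r ∈ (minpoly ℚ α).aroots ℂ, ∃ τ : alternatingGroup (Fin n), g τ = r := by
    intro r hr
    set φ1 := (IntermediateField.algHomAdjoinIntegralEquiv ℚ hQα).symm ⟨r, hr⟩ with hφ1
    have hφ1gen : φ1 (IntermediateField.AdjoinSimple.gen ℚ α) = r :=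
      IntermediateField.algHomAdjoinIntegralEquiv_symm_apply_gen ℚ hQα ⟨r, hr⟩
    let e : L ≃ₐ[ℚ] (IntermediateField.adjoin ℚ {α}) := IntermediateField.equivOfEq hgen.symm
    let φ : L →ₐ[ℚ] ℂ := φ1.comp e.toAlgHom
    have hφα : φ elα = r := by
      have h1 : e elα = IntermediateField.AdjoinSimple.gen ℚ α := by
        apply Subtype.ext
        show ((e elα : IntermediateField.adjoin ℚ {α}) : ℂ) = α
        exact helα
      show φ1 (e elα) = r
      rw [h1, hφ1gen]
    obtain ⟨σ, hσ⟩ := stmt8_exists_extend L (φ.restrictNormal' L)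
    have hσz : ∀ z : L, σ z = φ z := by
      intro z
      rw [hσ z]
      have h2 := AlgHom.restrictNormal_commutes φ L z
      rw [Algebra.algebraMap_self_apply] at h2
      rw [show ((φ.restrictNormal' ↥L) z : ℂ)
          = algebraMap ↥L ℂ ((φ.restrictNormal ↥L) z) from rfl]
      exact h2
    have hστ : ∀ i, ∃ j, σ (B i) = B j := by
      intro i
      have hroot2 : (Polynomial.aeval (σ (B i))) (minpoly ℚ b) = 0 := by
        show (Polynomial.aeval ((σ : ℂ →ₐ[ℚ] ℂ) (B i))) (minpoly ℚ b) = 0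
        rw [Polynomial.aeval_algHom_apply, hBroot i, map_zero]
      have hmem2 : σ (B i) ∈ (minpoly ℚ b).aroots ℂ :=
        Polynomial.mem_aroots.mpr ⟨hmpb_ne, hroot2⟩
      rw [hroots] at hmem2
      obtain ⟨j, -, hj⟩ := Multiset.mem_map.mp hmem2
      exact ⟨j, hj.symm⟩
    choose τ0 hτ0 using hστ
    have hτinj : Function.Injective τ0 := by
      intro i j hij
      apply hBinj
      apply σ.injective
      rw [hτ0 i, hτ0 j, hij]
    let τ : Equiv.Perm (Fin n) := Equiv.ofBijective τ0 (Finite.injective_iff_bijective.mp hτinj)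
    have hτ : ∀ i, σ (B i) = B (τ i) := hτ0
    have hτmem : τ ∈ alternatingGroup (Fin n) := by
      have : τ ∈ galoisImage n B := ⟨σ, hτ⟩
      rwa [hgal] at this
    refine ⟨⟨τ, hτmem⟩, ?_⟩
    have hσαr : σ α = r := by
      have h1 : σ α = φ elα := by
        rw [← helα]
        exact hσz elα
      rw [h1, hφα]
    rw [← hσαr, hσα σ τ hτ]
  -- the multiset of roots of `minpoly ℚ α`
  have hnodupα : ((minpoly ℚ α).aroots ℂ).Nodup :=
    Polynomial.nodup_roots (((minpoly.irreducible hQα).separable).map)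
  have hnodupg : (Multiset.map g Finset.univ.val).Nodup :=
    Multiset.Nodup.map hginj Finset.univ.nodup
  have harootsα : (minpoly ℚ α).aroots ℂ = Multiset.map g Finset.univ.val := by
    rw [Multiset.Nodup.ext hnodupα hnodupg]
    intro z
    constructor
    · intro hz
      obtain ⟨τ, hτ⟩ := hsurj z hz
      exact Multiset.mem_map.mpr ⟨τ, Finset.mem_val.mpr (Finset.mem_univ τ), hτ⟩
    · intro hz
      obtain ⟨τ, -, hτ⟩ := Multiset.mem_map.mp hz
      rw [← hτ]
      exact hgroot τ
  obtain ⟨hgne, hgsum, hlogα⟩ := stmt8_unit_mahler harootsα hαint hαinv hα0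
  -- per-conjugate logarithm
  have hlogg : ∀ τ : alternatingGroup (Fin n),
      Real.log (‖g τ‖) = ∑ j, x ((τ : Equiv.Perm (Fin n)) j) * y j := by
    intro τ
    have habs : ‖g τ‖
        = ∏ i, ‖B ((τ : Equiv.Perm (Fin n)) i)‖ ^ (a i) := by
      rw [hgdef, Complex.norm_prod]
      exact Finset.prod_congr rfl (fun i _ => Complex.norm_zpow _ _)
    have hlog1 : Real.log (‖g τ‖)
        = ∑ i, (a i : ℝ) * Real.log (‖B ((τ : Equiv.Perm (Fin n)) i)‖) := by
      rw [habs, Real.log_prod]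
      · exact Finset.sum_congr rfl fun i _ => Real.log_zpow _ _
      · intro i _
        exact zpow_ne_zero _ (by simpa using hBne0 _)
    have hxperm : ∑ j, x ((τ : Equiv.Perm (Fin n)) j) = 0 := by
      rw [Equiv.sum_comp (τ : Equiv.Perm (Fin n)) x]
      exact hx0
    have hsplit : ∑ j, x ((τ : Equiv.Perm (Fin n)) j) * y j
        = ∑ j, x ((τ : Equiv.Perm (Fin n)) j) * (a j : ℝ)
          - (∑ j, x ((τ : Equiv.Perm (Fin n)) j)) * ((1/(n:ℝ)) * ∑ i, (a i : ℝ)) := by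
      rw [Finset.sum_mul]
      rw [← Finset.sum_sub_distrib]
      refine Finset.sum_congr rfl (fun j _ => ?_)
      rw [hy j]
      ring
    rw [hlog1, hsplit, hxperm, zero_mul, sub_zero]
    refine Finset.sum_congr rfl (fun j _ => ?_)
    rw [hx]
    ring
  -- final computation
  rw [hlogα, snBil]
  rw [Finset.sum_congr rfl (fun τ _ => congrArg abs (hlogg τ))]
  have habs3 : ∀ τ : alternatingGroup (Fin n),
      |1/(n:ℝ) * ∑ j, x ((τ : Equiv.Perm (Fin n)) j) * y j|
      = (1/(n:ℝ)) * |∑ j, x ((τ : Equiv.Perm (Fin n)) j) * y j| := by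
    intro τ
    rw [abs_mul, abs_of_nonneg (by positivity)]
  rw [Finset.sum_congr rfl (fun τ _ => habs3 τ), ← Finset.mul_sum]
  have hfac : (n.factorial : ℝ) ≠ 0 := Nat.cast_ne_zero.mpr n.factorial_ne_zero
  field_simp
  ring
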